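/- Let n ≥ 7 be odd, and in the alternating group A_n on {1,…,n} let x₁ = (1,2,4) and y₁ = (1,2,3,4,…,n). Then there exist no automorphism φ of A_n and element g ∈ A_n such that gφ(x₁)g⁻¹ = x₁⁻¹ and gφ(y₁)g⁻¹ = y₁⁻¹. -/

import Mathlib

open Equiv List

private lemma formPerm_conj {α : Type*} [DecidableEq α] (σ : Equiv.Perm α) :
    ∀ l : List α, σ * l.formPerm * σ⁻¹ = (l.map σ).formPerm
  | [] => by simp
  | [a] => by simp
  | a :: b :: l => by
    have IH := formPerm_conj σ (b :: l)
    simp only [List.formPerm_cons_cons, List.map_cons] at IH ⊢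
    calc σ * (Equiv.swap a b * (b :: l).formPerm) * σ⁻¹
        = (σ * Equiv.swap a b * σ⁻¹) * (σ * (b :: l).formPerm * σ⁻¹) := by group
      _ = Equiv.swap (σ a) (σ b) * (σ b :: l.map σ).formPerm := by
          rw [← Equiv.swap_apply_apply, IH]

private lemma viaEmbedding_swap {α β : Type*} [DecidableEq α] [DecidableEq β] (ι : α ↪ β)
    (a b : α) : (Equiv.swap a b).viaEmbedding ι = Equiv.swap (ι a) (ι b) := by
  ext z
  by_cases hz : z ∈ Set.range ι
  · obtain ⟨w, rfl⟩ := hz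
    rw [Equiv.Perm.viaEmbedding_apply, ι.injective.swap_apply]
  · rw [Equiv.Perm.viaEmbedding_apply_of_notMem _ _ _ hz,
      Equiv.swap_apply_of_ne_of_ne (fun h => hz ⟨a, h.symm⟩) (fun h => hz ⟨b, h.symm⟩)]

private lemma viaEmbedding_formPerm {α β : Type*} [DecidableEq α] [DecidableEq β] (ι : α ↪ β) :
    ∀ l : List α, l.formPerm.viaEmbedding ι = (l.map ι).formPerm
  | [] => by simp [Equiv.Perm.viaEmbedding]
  | [a] => by simp [Equiv.Perm.viaEmbedding]
  | a :: b :: l => by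
    have IH := viaEmbedding_formPerm ι (b :: l)
    simp only [List.formPerm_cons_cons, List.map_cons] at IH ⊢
    rw [← Equiv.Perm.viaEmbeddingHom_apply, map_mul, Equiv.Perm.viaEmbeddingHom_apply,
      Equiv.Perm.viaEmbeddingHom_apply, viaEmbedding_swap, IH]

private lemma fp3_mid {α : Type*} [DecidableEq α] {a b c : α} (h1 : c ≠ a) (h2 : c ≠ b) :
    List.formPerm [a, b, c] b = c := by
  simp [List.formPerm_cons_cons, Equiv.swap_apply_of_ne_of_ne h1 h2]

private lemma fp3_last {α : Type*} [DecidableEq α] (a b c : α) :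
    List.formPerm [a, b, c] c = a := by
  simp [List.formPerm_cons_cons]

private lemma fp3_fix {α : Type*} [DecidableEq α] {a b c x : α} (h1 : x ≠ a) (h2 : x ≠ b)
    (h3 : x ≠ c) : List.formPerm [a, b, c] x = x :=
  List.formPerm_apply_of_notMem (by simp [h1, h2, h3])

/-- for odd `n ≥ 7`, with `x₁ = (1,2,4)` and `y₁ = (1,2,3,…,n)` in `A_n`,
there is no automorphism `φ` of `A_n` and element `g ∈ A_n` with
`g * φ x₁ * g⁻¹ = x₁⁻¹` and `g * φ y₁ * g⁻¹ = y₁⁻¹`.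
Points `1,…,n` are modelled by `Fin n` (zero-based) and cycles by `List.formPerm`. -/
theorem alternatingGroup_odd_first_pair_not_invertible
    (n : ℕ) [NeZero n] (hn : 7 ≤ n) (hodd : Odd n)
    (x₁ y₁ : Equiv.Perm (Fin n))
    (hx₁ : x₁ = List.formPerm [(0 : Fin n), 1, 3])
    (hy₁ : y₁ = List.formPerm (List.finRange n))
    (hx₁A : x₁ ∈ alternatingGroup (Fin n)) (hy₁A : y₁ ∈ alternatingGroup (Fin n)) :
    ¬ ∃ (φ : alternatingGroup (Fin n) ≃* alternatingGroup (Fin n))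
        (g : alternatingGroup (Fin n)),
        g * φ ⟨x₁, hx₁A⟩ * g⁻¹ = (⟨x₁, hx₁A⟩ : alternatingGroup (Fin n))⁻¹ ∧
        g * φ ⟨y₁, hy₁A⟩ * g⁻¹ = (⟨y₁, hy₁A⟩ : alternatingGroup (Fin n))⁻¹ := by
  rintro ⟨φ, g, h1, h2⟩
  open Fin.NatCast in set q : ℕ → Fin n := fun k => ((k : ℕ) : Fin n) with hqdef
  have hq : ∀ k : ℕ, k < n → (q k).val = k := by
    intro k hk; simp [hqdef, Fin.val_natCast, Nat.mod_eq_of_lt hk]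
  have hqne : ∀ a b : ℕ, a < n → b < n → a ≠ b → q a ≠ q b := by
    intro a b ha hb hab h
    exact hab (by rw [← hq a ha, ← hq b hb, h])
  have hqadd : ∀ a b : ℕ, q a + q b = q (a + b) := by
    intro a b; simp only [hqdef]; apply Fin.ext; simp [Fin.val_add, Nat.add_mod]
  -- pointwise description of y₁
  have hy : ∀ i : Fin n, y₁ i = i + 1 := by
    intro i
    have hi : (i : ℕ) < (List.finRange n).length := by simpa using i.isLt
    have h := List.formPerm_apply_getElem (List.finRange n) (List.nodup_finRange n) i.val hi
    simp only [List.getElem_finRange, List.length_finRange, Fin.cast_mk, Fin.eta] at h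
    rw [hy₁, h]
    apply Fin.ext
    rw [Fin.val_add]
    have h1n : (1 : Fin n).val = 1 := by
      have := hq 1 (by omega)
      simpa [hqdef] using this
    rw [h1n]
  have hyk : ∀ (k : ℕ) (i : Fin n), (y₁ ^ k) i = i + q k := by
    intro k
    induction k with
    | zero => intro i; simp [hqdef]
    | succ k ih =>
      intro i
      rw [pow_succ, Equiv.Perm.mul_apply, hy, ih, add_assoc]
      have h1 : (1 : Fin n) = q 1 := by simp [hqdef]; rfl
      rw [h1, hqadd, Nat.add_comm 1 k]
  have hlist013 : [(0 : Fin n), 1, 3] = [q 0, q 1, q 3] := by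
    simp [hqdef]; rfl
  -- the conjugates aₖ = yᵏ x y⁻ᵏ
  have haq : ∀ k : ℕ, y₁ ^ k * x₁ * (y₁ ^ k)⁻¹ = List.formPerm [q k, q (k + 1), q (k + 3)] := by
    intro k
    rw [hx₁, formPerm_conj, hlist013]
    congr 1
    simp only [List.map_cons, List.map_nil]
    rw [hyk, hyk, hyk, hqadd, hqadd, hqadd]
    simp [Nat.add_comm]
  -- embedding of Fin 7
  set ι : Fin 7 ↪ Fin n := Fin.castLEEmb hn with hιdef
  have hι : ∀ m : Fin 7, ι m = q m.val := by
    intro m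
    apply Fin.ext
    rw [hq m.val (lt_of_lt_of_le m.isLt hn)]
    simp [hιdef]
  set Φ : Equiv.Perm (Fin 7) →* Equiv.Perm (Fin n) := Equiv.Perm.viaEmbeddingHom ι with hΦdef
  have hΦ : ∀ u v w : Fin 7,
      Φ (List.formPerm [u, v, w]) = List.formPerm [q u.val, q v.val, q w.val] := by
    intro u v w
    rw [hΦdef, Equiv.Perm.viaEmbeddingHom_apply, viaEmbedding_formPerm]
    simp [hι]
  -- Fin 7 model cycles
  have h7 : ∀ c0 c1 c3 : Equiv.Perm (Fin 7),
      c0 = List.formPerm [0, 1, 3] → c1 = List.formPerm [1, 2, 4] →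
      c3 = List.formPerm [3, 4, 6] →
      c3 * c0⁻¹ * c3⁻¹ * c1⁻¹ * c0⁻¹ * c1 * c0 = 1 := by
    rintro _ _ _ rfl rfl rfl
    decide
  have h7' := h7 _ _ _ rfl rfl rfl
  have hval7 : ((0 : Fin 7) : ℕ) = 0 ∧ ((1 : Fin 7) : ℕ) = 1 ∧ ((2 : Fin 7) : ℕ) = 2 ∧
      ((3 : Fin 7) : ℕ) = 3 ∧ ((4 : Fin 7) : ℕ) = 4 ∧ ((6 : Fin 7) : ℕ) = 6 := by decide
  obtain ⟨e0, e1, e2, e3, e4, e6⟩ := hval7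
  have ha0 : y₁ ^ 0 * x₁ * (y₁ ^ 0)⁻¹ = Φ (List.formPerm [0, 1, 3]) := by
    rw [haq 0, hΦ, e0, e1, e3]
  have ha1 : y₁ ^ 1 * x₁ * (y₁ ^ 1)⁻¹ = Φ (List.formPerm [1, 2, 4]) := by
    rw [haq 1, hΦ, e1, e2, e4]
  have ha3 : y₁ ^ 3 * x₁ * (y₁ ^ 3)⁻¹ = Φ (List.formPerm [3, 4, 6]) := by
    rw [haq 3, hΦ, e3, e4, e6]
  -- subgroup elements
  set X : alternatingGroup (Fin n) := ⟨x₁, hx₁A⟩ with hX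
  set Y : alternatingGroup (Fin n) := ⟨y₁, hy₁A⟩ with hY
  have hcoeA : ∀ k : ℕ, ((Y ^ k * X * (Y ^ k)⁻¹ : alternatingGroup (Fin n)) : Equiv.Perm (Fin n))
      = y₁ ^ k * x₁ * (y₁ ^ k)⁻¹ := by
    intro k; push_cast [hX, hY]; rfl
  have hword : (Y ^ 3 * X * (Y ^ 3)⁻¹) * (Y ^ 0 * X * (Y ^ 0)⁻¹)⁻¹ * (Y ^ 3 * X * (Y ^ 3)⁻¹)⁻¹
      * (Y ^ 1 * X * (Y ^ 1)⁻¹)⁻¹ * (Y ^ 0 * X * (Y ^ 0)⁻¹)⁻¹ * (Y ^ 1 * X * (Y ^ 1)⁻¹)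
      * (Y ^ 0 * X * (Y ^ 0)⁻¹) = 1 := by
    apply Subtype.ext
    push_cast
    rw [ha0, ha1, ha3, ← map_inv, ← map_inv, ← map_inv,
      ← map_mul, ← map_mul, ← map_mul, ← map_mul, ← map_mul, ← map_mul, h7', map_one]
  -- the twisted automorphism
  set ψ : alternatingGroup (Fin n) →* alternatingGroup (Fin n) :=
    (MulAut.conj g).toMonoidHom.comp φ.toMonoidHom with hψdef
  have hψ : ∀ z, ψ z = g * φ z * g⁻¹ := fun z => rfl
  have hψX : ψ X = X⁻¹ := by rw [hψ X]; exact h1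
  have hψY : ψ Y = Y⁻¹ := by rw [hψ Y]; exact h2
  have hψA : ∀ k : ℕ, ψ (Y ^ k * X * (Y ^ k)⁻¹) = (Y ^ k)⁻¹ * X⁻¹ * Y ^ k := by
    intro k
    simp only [map_mul, map_inv, map_pow, hψX, hψY, inv_pow, inv_inv]
  have hV : ((Y ^ 3)⁻¹ * X⁻¹ * Y ^ 3) * ((Y ^ 0)⁻¹ * X⁻¹ * Y ^ 0)⁻¹
      * ((Y ^ 3)⁻¹ * X⁻¹ * Y ^ 3)⁻¹ * ((Y ^ 1)⁻¹ * X⁻¹ * Y ^ 1)⁻¹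
      * ((Y ^ 0)⁻¹ * X⁻¹ * Y ^ 0)⁻¹ * ((Y ^ 1)⁻¹ * X⁻¹ * Y ^ 1)
      * ((Y ^ 0)⁻¹ * X⁻¹ * Y ^ 0) = 1 := by
    have h := congrArg ψ hword
    rw [map_one] at h
    rw [← h]
    simp only [map_mul, map_inv, map_pow, hψX, hψY, inv_pow, inv_inv]
  -- pass to ambient permutations
  have hcoeB : ∀ k : ℕ, (((Y ^ k)⁻¹ * X⁻¹ * Y ^ k : alternatingGroup (Fin n))
      : Equiv.Perm (Fin n)) = (y₁ ^ k)⁻¹ * x₁⁻¹ * y₁ ^ k := by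
    intro k; push_cast [hX, hY]; rfl
  have hVamb : ((y₁ ^ 3)⁻¹ * x₁⁻¹ * y₁ ^ 3) * ((y₁ ^ 0)⁻¹ * x₁⁻¹ * y₁ ^ 0)⁻¹
      * ((y₁ ^ 3)⁻¹ * x₁⁻¹ * y₁ ^ 3)⁻¹ * ((y₁ ^ 1)⁻¹ * x₁⁻¹ * y₁ ^ 1)⁻¹
      * ((y₁ ^ 0)⁻¹ * x₁⁻¹ * y₁ ^ 0)⁻¹ * ((y₁ ^ 1)⁻¹ * x₁⁻¹ * y₁ ^ 1)
      * ((y₁ ^ 0)⁻¹ * x₁⁻¹ * y₁ ^ 0) = 1 := by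
    have h := congrArg (Subtype.val) hV
    push_cast at h
    exact h
  -- formPerm descriptions of the bₖ
  have hbform : ∀ k : ℕ, (y₁ ^ k)⁻¹ * x₁⁻¹ * y₁ ^ k
      = (List.formPerm ([q 0, q 1, q 3].map (⇑((y₁ ^ k)⁻¹))))⁻¹ := by
    intro k
    rw [← formPerm_conj, ← hlist013, ← hx₁]
    group
  have hyinv : ∀ (k : ℕ) (a b : Fin n), (y₁ ^ k) b = a → ((y₁ ^ k)⁻¹) a = b := by
    intro k a b h; rw [← h]; exact Equiv.symm_apply_apply _ _
  have hqn : q n = 0 := Fin.natCast_self n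
  have hb0 : (y₁ ^ 0)⁻¹ * x₁⁻¹ * y₁ ^ 0 = (List.formPerm [q 0, q 1, q 3])⁻¹ := by
    rw [hbform 0]
    simp
  have hb1 : (y₁ ^ 1)⁻¹ * x₁⁻¹ * y₁ ^ 1
      = (List.formPerm [q (n - 1), q 0, q 2])⁻¹ := by
    rw [hbform 1]
    congr 2
    simp only [List.map_cons, List.map_nil]
    rw [hyinv 1 (q 0) (q (n - 1))
        (by rw [hyk, hqadd, (by omega : n - 1 + 1 = n), hqn]; simp [hqdef]),
      hyinv 1 (q 1) (q 0) (by rw [hyk, hqadd]),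
      hyinv 1 (q 3) (q 2) (by rw [hyk, hqadd])]
  have hb3 : (y₁ ^ 3)⁻¹ * x₁⁻¹ * y₁ ^ 3
      = (List.formPerm [q (n - 3), q (n - 2), q 0])⁻¹ := by
    rw [hbform 3]
    congr 2
    simp only [List.map_cons, List.map_nil]
    rw [hyinv 3 (q 0) (q (n - 3))
        (by rw [hyk, hqadd, (by omega : n - 3 + 3 = n), hqn]; simp [hqdef]),
      hyinv 3 (q 1) (q (n - 2))
        (by rw [hyk, hqadd, (by omega : n - 2 + 3 = n + 1), ← hqadd, hqn, zero_add]),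
      hyinv 3 (q 3) (q 0) (by rw [hyk, hqadd])]
  have hrev : ∀ a b c : Fin n, (List.formPerm [a, b, c])⁻¹ = List.formPerm [c, b, a] := by
    intro a b c
    rw [← List.formPerm_reverse]
    rfl
  -- evaluate the relation at the point q 0
  have hev := congrArg (fun σ : Equiv.Perm (Fin n) => σ (q 0)) hVamb
  simp only [hb0, hb1, hb3, Equiv.Perm.mul_apply, inv_inv, Equiv.Perm.one_apply] at hev
  rw [hrev, hrev, hrev] at hev
  rw [show List.formPerm [q 3, q 1, q 0] (q 0) = q 3 from fp3_last _ _ _] at hev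
  rw [show List.formPerm [q 2, q 0, q (n - 1)] (q 3) = q 3 from
      fp3_fix (hqne 3 2 (by omega) (by omega) (by omega))
        (hqne 3 0 (by omega) (by omega) (by omega))
        (hqne 3 (n - 1) (by omega) (by omega) (by omega))] at hev
  rw [show List.formPerm [q 0, q 1, q 3] (q 3) = q 0 from fp3_last _ _ _] at hev
  rw [show List.formPerm [q (n - 1), q 0, q 2] (q 0) = q 2 from
      fp3_mid (hqne 2 (n - 1) (by omega) (by omega) (by omega))
        (hqne 2 0 (by omega) (by omega) (by omega))] at hev
  rw [show List.formPerm [q (n - 3), q (n - 2), q 0] (q 2) = q 2 from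
      fp3_fix (hqne 2 (n - 3) (by omega) (by omega) (by omega))
        (hqne 2 (n - 2) (by omega) (by omega) (by omega))
        (hqne 2 0 (by omega) (by omega) (by omega))] at hev
  rw [show List.formPerm [q 0, q 1, q 3] (q 2) = q 2 from
      fp3_fix (hqne 2 0 (by omega) (by omega) (by omega))
        (hqne 2 1 (by omega) (by omega) (by omega))
        (hqne 2 3 (by omega) (by omega) (by omega))] at hev
  rw [show List.formPerm [q 0, q (n - 2), q (n - 3)] (q 2) = q 2 from
      fp3_fix (hqne 2 0 (by omega) (by omega) (by omega))
        (hqne 2 (n - 2) (by omega) (by omega) (by omega))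
        (hqne 2 (n - 3) (by omega) (by omega) (by omega))] at hev
  exact hqne 2 0 (by omega) (by omega) (by omega) hev
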